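/- Let π₁, π₂ be pairings of [n]. If R ⊆ [n] is a set containing exactly one element of each pair of π₁ and exactly one element of each pair of π₂, then any two permutations σ₁, σ₂ ∈ Sₙ with σᵢ(standard pairing) = πᵢ and σᵢ({1,3,…,n−1}) = R satisfy sgn(σ₂σ₁⁻¹) = (−1)^{n/2 − #(π₁∨π₂)}. Moreover σ₂σ₁⁻¹ can be chosen to fix R pointwise and act as π₂π₁ on [n]∖R. -/

import Mathlib

/-- The number of blocks of the join of the orbit partitions of two permutations. -/
noncomputable def jointOrbitCount {I : Type*} (π₁ π₂ : Equiv.Perm I) : ℕ :=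
  Nat.card (MulAction.orbitRel.Quotient
    (Subgroup.closure {π₁, π₂} : Subgroup (Equiv.Perm I)) I)

/-- A pairing: a fixed-point-free involution. -/
def IsPairing {I : Type*} (π : Equiv.Perm I) : Prop :=
  π * π = 1 ∧ ∀ x, π x ≠ x

/-- σ maps the standard pairing {{0,1},{2,3},…} of Fin n to the pairing π. -/
def MapsStd {n : ℕ} (σ π : Equiv.Perm (Fin n)) : Prop :=
  ∀ k : Fin n, k.1 % 2 = 0 → ∀ h1 : k.1 + 1 < n, π (σ k) = σ ⟨k.1 + 1, h1⟩

/-- The even positions of Fin n (the odd numbers in 1-indexed convention). -/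
def Evens (n : ℕ) : Set (Fin n) := {k | k.1 % 2 = 0}


open Equiv Equiv.Perm in
lemma orbitRel_perm_iff {α : Type*} (H : Subgroup (Equiv.Perm α)) (a b : α) :
    MulAction.orbitRel H α a b ↔ ∃ σ ∈ H, σ b = a := by
  rw [MulAction.orbitRel_apply, MulAction.mem_orbit_iff]
  constructor
  · rintro ⟨⟨σ, hσ⟩, rfl⟩; exact ⟨σ, hσ, rfl⟩
  · rintro ⟨σ, hσ, rfl⟩; exact ⟨⟨σ, hσ⟩, rfl⟩

open Equiv Equiv.Perm in
lemma orbitCount_eq {α : Type*} [Fintype α] [DecidableEq α] (h : Equiv.Perm α) :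
    Nat.card (MulAction.orbitRel.Quotient (Subgroup.closure {h} : Subgroup (Equiv.Perm α)) α)
      = (Finset.univ.filter fun x => h x = x).card + h.cycleFactorsFinset.card := by
  classical
  set H := (Subgroup.closure {h} : Subgroup (Equiv.Perm α)) with hH
  have hrel : ∀ a b : α, (MulAction.orbitRel H α) a b ↔ h.SameCycle b a := by
    intro a b
    rw [orbitRel_perm_iff]
    constructor
    · rintro ⟨σ, hσ, rfl⟩
      obtain ⟨k, rfl⟩ := Subgroup.mem_closure_singleton.1 hσ
      exact ⟨k, rfl⟩
    · rintro ⟨k, rfl⟩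
      exact ⟨h ^ k, Subgroup.mem_closure_singleton.2 ⟨k, rfl⟩, rfl⟩
  let f : α → {x : α // h x = x} ⊕ {c : Equiv.Perm α // c ∈ h.cycleFactorsFinset} := fun x =>
    if hx : h x = x then Sum.inl ⟨x, hx⟩
    else Sum.inr ⟨h.cycleOf x, cycleOf_mem_cycleFactorsFinset_iff.2 (mem_support.2 hx)⟩
  have hf : ∀ a b : α, h.SameCycle a b → f a = f b := by
    intro a b hab
    by_cases ha : h a = a
    · obtain ⟨k, rfl⟩ := hab
      rw [zpow_apply_eq_self_of_apply_eq_self ha k]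
    · have hb : ¬ h b = b := by
        intro hb
        obtain ⟨k, hk⟩ := hab.symm
        rw [zpow_apply_eq_self_of_apply_eq_self hb k] at hk
        exact ha (hk ▸ hb)
      simp only [f, dif_neg ha, dif_neg hb]
      exact congrArg _ (Subtype.ext hab.cycleOf_eq)
  let F : MulAction.orbitRel.Quotient H α → _ := fun q =>
    Quotient.liftOn' q f (fun a b hab => (hf b a ((hrel a b).1 hab)).symm)
  have hFbij : Function.Bijective F := by
    constructor
    · intro q₁ q₂
      refine Quotient.inductionOn₂' q₁ q₂ (fun a b hab => ?_)
      have hab : f a = f b := hab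
      refine Quotient.sound' ((hrel a b).2 ?_)
      by_cases ha : h a = a <;> by_cases hb : h b = b <;>
        simp only [f, dif_pos, dif_neg, ha, hb] at hab
      · obtain ⟨rfl⟩ : a = b := by simpa using hab
        exact ⟨0, by simp⟩
      · simp at hab
      · simp at hab
      · have hEq : h.cycleOf a = h.cycleOf b := by simpa using hab
        have hb' : b ∈ (h.cycleOf a).support := by
          rw [hEq]
          exact mem_support_cycleOf_iff.2 ⟨SameCycle.refl _ _, mem_support.2 hb⟩
        exact ((mem_support_cycleOf_iff.1 hb').1).symm
    · rintro (⟨x, hx⟩ | ⟨c, hc⟩)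
      · exact ⟨Quotient.mk'' x, by simp [F, Quotient.liftOn'_mk'', f, hx]⟩
      · obtain ⟨x, hx, -⟩ := (mem_cycleFactorsFinset_iff.1 hc).1
        have hxc : x ∈ c.support := mem_support.2 hx
        have hxh : x ∈ h.support := mem_cycleFactorsFinset_support_le hc hxc
        refine ⟨Quotient.mk'' x, ?_⟩
        have : f x = Sum.inr ⟨c, hc⟩ := by
          simp only [f, dif_neg (mem_support.1 hxh)]
          exact congrArg _ (Subtype.ext (cycle_is_cycleOf hxc hc).symm)
        simpa [F, Quotient.liftOn'_mk''] using this
  rw [Nat.card_eq_of_bijective F hFbij, Nat.card_sum, Nat.card_eq_fintype_card,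
    Nat.card_eq_fintype_card, Fintype.card_subtype, Fintype.card_coe]


lemma dihedral_form {G : Type*} [Group G] {a b : G} (ha : a * a = 1) (hb : b * b = 1)
    {x : G} (hx : x ∈ Subgroup.closure ({a, b} : Set G)) :
    ∃ k : ℤ, x = (b * a) ^ k ∨ x = (b * a) ^ k * a := by
  have hainv : a⁻¹ = a := (eq_inv_of_mul_eq_one_left ha).symm
  have hbinv : b⁻¹ = b := (eq_inv_of_mul_eq_one_left hb).symm
  have h1 : a * (b * a) * a⁻¹ = (b * a)⁻¹ := by
    rw [mul_inv_rev, hainv, hbinv]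
    simp [mul_assoc, ha]
  have hg : ∀ k : ℤ, a * (b * a) ^ k * a = (b * a) ^ (-k) := by
    intro k
    calc a * (b * a) ^ k * a = a * (b * a) ^ k * a⁻¹ := by rw [hainv]
    _ = (a * (b * a) * a⁻¹) ^ k := (conj_zpow ..).symm
    _ = ((b * a)⁻¹) ^ k := by rw [h1]
    _ = (b * a) ^ (-k) := by rw [inv_zpow, zpow_neg]
  have hswap : ∀ k : ℤ, a * (b * a) ^ k = (b * a) ^ (-k) * a := by
    intro k
    have := congrArg (· * a) (hg k)
    simpa [mul_assoc, ha] using this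
  refine Subgroup.closure_induction
    (p := fun x _ => ∃ k : ℤ, x = (b * a) ^ k ∨ x = (b * a) ^ k * a) ?_ ?_ ?_ ?_ hx
  · intro x hx
    rw [Set.mem_insert_iff, Set.mem_singleton_iff] at hx
    rcases hx with rfl | rfl
    · exact ⟨0, Or.inr (by simp)⟩
    · refine ⟨1, Or.inr ?_⟩
      rw [zpow_one, mul_assoc, ha, mul_one]
  · exact ⟨0, Or.inl (by simp)⟩
  · rintro x y hxm hym ⟨j, hj | hj⟩ ⟨k, hk | hk⟩ <;> subst hj <;> subst hk
    · exact ⟨j + k, Or.inl (zpow_add _ _ _).symm⟩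
    · exact ⟨j + k, Or.inr (by rw [← mul_assoc, ← zpow_add])⟩
    · refine ⟨j - k, Or.inr ?_⟩
      rw [mul_assoc, hswap k, ← mul_assoc, ← zpow_add, ← sub_eq_add_neg]
    · refine ⟨j - k, Or.inl ?_⟩
      rw [mul_assoc, ← mul_assoc a, hswap k, mul_assoc _ a a, ha, mul_one, ← zpow_add,
        ← sub_eq_add_neg]
  · rintro x hxm ⟨k, hk | hk⟩ <;> subst hk
    · exact ⟨-k, Or.inl (zpow_neg _ _).symm⟩
    · refine ⟨k, Or.inr ?_⟩
      rw [mul_inv_rev, hainv, ← zpow_neg, hswap, neg_neg]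



noncomputable def buildPerm {n m : ℕ} (hm : n = m + m) (π : Equiv.Perm (Fin n))
    (R : Set (Fin n)) (e : Fin m → Fin n)
    (hπR : ∀ x, x ∈ R ↔ π x ∉ R) (he : ∀ j, e j ∈ R) (einj : Function.Injective e) :
    Equiv.Perm (Fin n) :=
  Equiv.ofBijective
    (fun k => if k.1 % 2 = 0 then e ⟨k.1 / 2, by have := k.2; omega⟩
      else π (e ⟨k.1 / 2, by have := k.2; omega⟩))
    (by
      refine Finite.injective_iff_bijective.1 ?_
      intro k l hkl
      dsimp only at hkl
      by_cases hk : k.1 % 2 = 0 <;> by_cases hl : l.1 % 2 = 0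
      · rw [if_pos hk, if_pos hl] at hkl
        have := Fin.mk.injEq .. ▸ einj hkl
        exact Fin.ext (by omega)
      · rw [if_pos hk, if_neg hl] at hkl
        exact absurd (hkl ▸ he _) ((hπR _).1 (he _))
      · rw [if_neg hk, if_pos hl] at hkl
        exact absurd (hkl ▸ he _) ((hπR _).1 (he _))
      · rw [if_neg hk, if_neg hl] at hkl
        have := Fin.mk.injEq .. ▸ einj (π.injective hkl)
        exact Fin.ext (by omega))

lemma buildPerm_apply_even {n m : ℕ} (hm : n = m + m) (π : Equiv.Perm (Fin n))
    (R : Set (Fin n)) (e : Fin m → Fin n)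
    (hπR : ∀ x, x ∈ R ↔ π x ∉ R) (he : ∀ j, e j ∈ R) (einj : Function.Injective e)
    (k : Fin n) (hk : k.1 % 2 = 0) :
    buildPerm hm π R e hπR he einj k = e ⟨k.1 / 2, by have := k.2; omega⟩ := by
  simp only [buildPerm, Equiv.ofBijective_apply, if_pos hk]

lemma buildPerm_apply_odd {n m : ℕ} (hm : n = m + m) (π : Equiv.Perm (Fin n))
    (R : Set (Fin n)) (e : Fin m → Fin n)
    (hπR : ∀ x, x ∈ R ↔ π x ∉ R) (he : ∀ j, e j ∈ R) (einj : Function.Injective e)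
    (k : Fin n) (hk : ¬ k.1 % 2 = 0) :
    buildPerm hm π R e hπR he einj k = π (e ⟨k.1 / 2, by have := k.2; omega⟩) := by
  simp only [buildPerm, Equiv.ofBijective_apply, if_neg hk]

attribute [irreducible] buildPerm

lemma buildPerm_mapsStd {n m : ℕ} (hm : n = m + m) (π : Equiv.Perm (Fin n))
    (R : Set (Fin n)) (e : Fin m → Fin n)
    (hπR : ∀ x, x ∈ R ↔ π x ∉ R) (he : ∀ j, e j ∈ R) (einj : Function.Injective e) :
    MapsStd (buildPerm hm π R e hπR he einj) π := by
  intro k hk h1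
  rw [buildPerm_apply_even hm π R e hπR he einj k hk,
    buildPerm_apply_odd hm π R e hπR he einj ⟨k.1 + 1, h1⟩ (by dsimp only; omega)]
  have heq : (⟨(⟨k.1 + 1, h1⟩ : Fin n).1 / 2, by dsimp only; omega⟩ : Fin m)
      = ⟨k.1 / 2, by have := k.2; omega⟩ :=
    Fin.ext (by dsimp only; omega)
  rw [heq]

lemma buildPerm_image {n m : ℕ} (hm : n = m + m) (π : Equiv.Perm (Fin n))
    (R : Set (Fin n)) (e : Fin m → Fin n)
    (hπR : ∀ x, x ∈ R ↔ π x ∉ R) (he : ∀ j, e j ∈ R) (einj : Function.Injective e)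
    (hesurj : ∀ x ∈ R, ∃ j, e j = x) :
    ⇑(buildPerm hm π R e hπR he einj) '' Evens n = R := by
  ext x
  constructor
  · rintro ⟨k, hk, rfl⟩
    have hk' : k.1 % 2 = 0 := hk
    rw [buildPerm_apply_even hm π R e hπR he einj k hk']
    exact he _
  · intro hx
    obtain ⟨j, hj⟩ := hesurj x hx
    refine ⟨⟨2 * j.1, by have := j.2; omega⟩, by show 2 * j.1 % 2 = 0; omega, ?_⟩
    rw [buildPerm_apply_even hm π R e hπR he einj _ (by show 2 * j.1 % 2 = 0; omega)]
    have heq : (⟨(⟨2 * j.1, by have := j.2; omega⟩ : Fin n).1 / 2, by dsimp only; have := j.2; omega⟩ : Fin m) = j :=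
      Fin.ext (by dsimp only; omega)
    rw [heq, hj]



lemma Equiv.Perm.inv_apply_self {α : Type*} (f : Equiv.Perm α) (x : α) : f⁻¹ (f x) = x :=
  f.symm_apply_apply x

lemma Equiv.Perm.apply_inv_self {α : Type*} (f : Equiv.Perm α) (x : α) : f (f⁻¹ x) = x :=
  f.apply_symm_apply x

lemma sign_eq_of_mapsStd {n m : ℕ} (hm : n = m + m) (π : Equiv.Perm (Fin n)) (R : Set (Fin n))
    (σ σ' : Equiv.Perm (Fin n)) (hσ : MapsStd σ π) (hσ' : MapsStd σ' π)
    (hiσ : ⇑σ '' Evens n = R) (hiσ' : ⇑σ' '' Evens n = R) :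
    Equiv.Perm.sign σ = Equiv.Perm.sign σ' := by
  classical
  set τ := σ⁻¹ * σ' with hτ
  have hτe : ∀ k : Fin n, k.1 % 2 = 0 → (τ k).1 % 2 = 0 := by
    intro k hk
    have hmem : σ' k ∈ R := hiσ' ▸ ⟨k, hk, rfl⟩
    rw [← hiσ] at hmem
    obtain ⟨y, hy, hyk⟩ := hmem
    have hty : τ k = y := by
      simp only [hτ, Equiv.Perm.mul_apply, ← hyk, Equiv.Perm.inv_apply_self]
    rw [hty]; exact hy
  have hτo : ∀ (k : Fin n) (hk : k.1 % 2 = 0) (h1 : k.1 + 1 < n),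
      τ ⟨k.1 + 1, h1⟩ = ⟨(τ k).1 + 1, by have := (τ k).2; have := hτe k hk; omega⟩ := by
    intro k hk h1
    have htke : (τ k).1 % 2 = 0 := hτe k hk
    have h2 : (τ k).1 + 1 < n := by have := (τ k).2; omega
    apply σ.injective
    have e1 : σ (τ ⟨k.1 + 1, h1⟩) = σ' ⟨k.1 + 1, h1⟩ := by
      simp [hτ, Equiv.Perm.mul_apply]
    have e2 : σ (τ k) = σ' k := by simp [hτ, Equiv.Perm.mul_apply]
    rw [e1, ← hσ' k hk h1, ← e2, hσ (τ k) htke h2]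
  have hτo' : ∀ x : Fin n, ¬ x.1 % 2 = 0 → ¬ (τ x).1 % 2 = 0 := by
    intro x hx
    have hlt : x.1 - 1 < n := by have := x.2; omega
    have hxeq : x = ⟨(⟨x.1 - 1, hlt⟩ : Fin n).1 + 1, by dsimp only; have := x.2; omega⟩ :=
      Fin.ext (by dsimp only; omega)
    rw [hxeq, hτo ⟨x.1 - 1, hlt⟩ (by dsimp only; omega) _]
    have := hτe ⟨x.1 - 1, hlt⟩ (by dsimp only; omega)
    dsimp only
    omega
  have hp : ∀ x : Fin n, x.1 % 2 = 0 ↔ (τ x).1 % 2 = 0 :=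
    fun x => ⟨hτe x, fun h => by by_contra hc; exact hτo' x hc h⟩
  set a : Equiv.Perm (Fin n) :=
    Equiv.Perm.ofSubtype (τ.subtypePerm (fun x => (hp x).symm) : Equiv.Perm {x : Fin n // x.1 % 2 = 0}) with ha
  have haeven : ∀ (x : Fin n) (hx : x.1 % 2 = 0), a x = τ x :=
    fun x hx => Equiv.Perm.ofSubtype_apply_of_mem (τ.subtypePerm (fun x => (hp x).symm)) hx
  have haodd : ∀ x : Fin n, ¬ x.1 % 2 = 0 → a x = x :=
    fun x hx => Equiv.Perm.ofSubtype_apply_of_not_mem (τ.subtypePerm (fun x => (hp x).symm)) hx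
  have hsinv : Function.Involutive (fun k : Fin n =>
      if h : k.1 % 2 = 0 then (⟨k.1 + 1, by have := k.2; omega⟩ : Fin n)
      else ⟨k.1 - 1, by have := k.2; omega⟩) := by
    intro k
    dsimp only
    by_cases hk : k.1 % 2 = 0
    · rw [dif_pos hk, dif_neg (by dsimp only; omega)]
      exact Fin.ext (by dsimp only; omega)
    · rw [dif_neg hk, dif_pos (by dsimp only; omega)]
      exact Fin.ext (by dsimp only; omega)
  set s : Equiv.Perm (Fin n) := hsinv.toPerm with hs
  have hseven : ∀ (x : Fin n) (hx : x.1 % 2 = 0) (h1 : x.1 + 1 < n), s x = ⟨x.1 + 1, h1⟩ := by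
    intro x hx h1
    show (if h : x.1 % 2 = 0 then _ else _) = _
    rw [dif_pos hx]
  have hsodd : ∀ (x : Fin n) (hx : ¬ x.1 % 2 = 0) (h1 : x.1 - 1 < n), s x = ⟨x.1 - 1, h1⟩ := by
    intro x hx h1
    show (if h : x.1 % 2 = 0 then _ else _) = _
    rw [dif_neg hx]
  have hkey : τ = a * (s * a * s) := by
    apply Equiv.ext
    intro x
    have hxlt := x.2
    by_cases hx : x.1 % 2 = 0
    · have h1 : x.1 + 1 < n := by omega
      have t1 : s x = ⟨x.1 + 1, h1⟩ := hseven x hx h1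
      have t2 : a (⟨x.1 + 1, h1⟩ : Fin n) = ⟨x.1 + 1, h1⟩ := haodd _ (by dsimp only; omega)
      have t3 : s (⟨x.1 + 1, h1⟩ : Fin n) = ⟨x.1 + 1 - 1, by omega⟩ :=
        hsodd _ (by dsimp only; omega) _
      have t4 : (⟨x.1 + 1 - 1, by omega⟩ : Fin n) = x := Fin.ext (by dsimp only; omega)
      calc τ x = a (s (a (s x))) := by rw [t1, t2, t3, t4, haeven x hx]
      _ = (a * (s * a * s)) x := by simp only [Equiv.Perm.mul_apply]
    · have hlt : x.1 - 1 < n := by omega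
      have hev : (x.1 - 1) % 2 = 0 := by omega
      have t1 : s x = ⟨x.1 - 1, hlt⟩ := hsodd x hx hlt
      have t2 : a (⟨x.1 - 1, hlt⟩ : Fin n) = τ ⟨x.1 - 1, hlt⟩ := haeven _ hev
      have hτev : (τ ⟨x.1 - 1, hlt⟩).1 % 2 = 0 := hτe _ hev
      have h2 : (τ ⟨x.1 - 1, hlt⟩).1 + 1 < n := by have := (τ ⟨x.1 - 1, hlt⟩).2; omega
      have t3 : s (τ ⟨x.1 - 1, hlt⟩) = ⟨(τ ⟨x.1 - 1, hlt⟩).1 + 1, h2⟩ :=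
        hseven _ hτev h2
      have h3 : (x.1 - 1) + 1 < n := by omega
      have t4 : τ ⟨(x.1 - 1) + 1, h3⟩ = ⟨(τ ⟨x.1 - 1, hlt⟩).1 + 1, by
          have := (τ ⟨x.1 - 1, hlt⟩).2; have := hτe (⟨x.1 - 1, hlt⟩ : Fin n) hev; omega⟩ :=
        hτo ⟨x.1 - 1, hlt⟩ hev h3
      have t5 : (⟨(x.1 - 1) + 1, h3⟩ : Fin n) = x := Fin.ext (by dsimp only; omega)
      have t6 : (⟨(τ ⟨x.1 - 1, hlt⟩).1 + 1, h2⟩ : Fin n) = τ x := by rw [← t4, t5]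
      have t7 : a (τ x) = τ x := haodd _ (by have := hτo' x hx; omega)
      calc τ x = a (s (a (s x))) := by rw [t1, t2, t3, t6, t7]
      _ = (a * (s * a * s)) x := by simp only [Equiv.Perm.mul_apply]
  have hsign : Equiv.Perm.sign τ = 1 := by
    rw [hkey, map_mul, map_mul, map_mul]
    generalize Equiv.Perm.sign a = u
    generalize Equiv.Perm.sign s = v
    calc u * (v * u * v) = u * (u * (v * v)) := by rw [mul_comm v u, mul_assoc]
    _ = (u * u) * (v * v) := (mul_assoc ..).symm
    _ = 1 := by rw [Int.units_mul_self, Int.units_mul_self, one_mul]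
  have hστ : σ' = σ * τ := (mul_inv_cancel_left σ σ').symm
  rw [hστ, map_mul, hsign, mul_one]

set_option maxHeartbeats 2000000 in
theorem stmt13 (n : ℕ) (hn : Even n) (π₁ π₂ : Equiv.Perm (Fin n))
    (h₁ : IsPairing π₁) (h₂ : IsPairing π₂) (R : Set (Fin n))
    (hR₁ : ∀ x, x ∈ R ↔ π₁ x ∉ R) (hR₂ : ∀ x, x ∈ R ↔ π₂ x ∉ R) :
    -- any two permutations realizing the pairings with representatives R
    -- give the stated sign:
    (∀ σ₁ σ₂ : Equiv.Perm (Fin n), MapsStd σ₁ π₁ → MapsStd σ₂ π₂ →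
      (⇑σ₁) '' Evens n = R → (⇑σ₂) '' Evens n = R →
      Equiv.Perm.sign (σ₂ * σ₁⁻¹) = (-1) ^ (n / 2 - jointOrbitCount π₁ π₂)) ∧
    -- moreover σ₂σ₁⁻¹ can be chosen to fix R pointwise and act as π₂π₁ on the
    -- complement of R:
    ∃ σ₁ σ₂ : Equiv.Perm (Fin n), MapsStd σ₁ π₁ ∧ MapsStd σ₂ π₂ ∧
      (⇑σ₁) '' Evens n = R ∧ (⇑σ₂) '' Evens n = R ∧
      (∀ x ∈ R, (σ₂ * σ₁⁻¹) x = x) ∧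
      (∀ x ∉ R, (σ₂ * σ₁⁻¹) x = (π₂ * π₁) x) := by
  classical
  obtain ⟨m, hm⟩ := hn
  have hπ₁i : ∀ x, π₁ (π₁ x) = x := fun x => by
    rw [← Equiv.Perm.mul_apply, h₁.1, Equiv.Perm.one_apply]
  have hπ₂i : ∀ x, π₂ (π₂ x) = x := fun x => by
    rw [← Equiv.Perm.mul_apply, h₂.1, Equiv.Perm.one_apply]
  have hR₁' : ∀ x, x ∉ R → π₁ x ∈ R := fun x hx => by
    by_contra hc; exact hx ((hR₁ x).2 hc)
  have hR₂' : ∀ x, x ∉ R → π₂ x ∈ R := fun x hx => by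
    by_contra hc; exact hx ((hR₂ x).2 hc)
  obtain ⟨g, hgdef⟩ : ∃ y : Equiv.Perm (Fin n), y = π₂ * π₁ := ⟨_, rfl⟩
  have hgapp : ∀ x, g x = π₂ (π₁ x) := fun x => by rw [hgdef]; rfl
  have hgR : ∀ x, x ∈ R → g x ∈ R := fun x hx => by
    rw [hgapp]; exact hR₂' _ ((hR₁ x).1 hx)
  have hgRc : ∀ x, x ∉ R → g x ∉ R := fun x hx => by
    rw [hgapp]; exact (hR₂ _).1 (hR₁' x hx)
  have hπ₁inv : π₁⁻¹ = π₁ := inv_eq_of_mul_eq_one_left h₁.1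
  have hπ₂inv : π₂⁻¹ = π₂ := inv_eq_of_mul_eq_one_left h₂.1
  have hginv : ∀ x, g⁻¹ x = π₁ (π₂ x) := fun x => by
    rw [hgdef, mul_inv_rev, hπ₁inv, hπ₂inv]; rfl
  have hginvR : ∀ x, x ∈ R → g⁻¹ x ∈ R := fun x hx => by
    rw [hginv]; exact hR₁' _ ((hR₂ x).1 hx)
  have hginvRc : ∀ x, x ∉ R → g⁻¹ x ∉ R := fun x hx => by
    rw [hginv]; exact (hR₁ _).1 (hR₂' x hx)
  have hgz : ∀ (k : ℤ) (x), x ∈ R → (g ^ k) x ∈ R := by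
    intro k
    induction k using Int.induction_on with
    | zero => intro x hx; simpa using hx
    | succ i ih =>
      intro x hx
      rw [zpow_add_one, Equiv.Perm.mul_apply]
      exact ih _ (hgR x hx)
    | pred i ih =>
      intro x hx
      rw [zpow_sub_one, Equiv.Perm.mul_apply]
      exact ih _ (hginvR x hx)
  have hgzc : ∀ (k : ℤ) (x), x ∉ R → (g ^ k) x ∉ R := by
    intro k x hx hc
    have h2 := hgz (-k) _ hc
    rw [← Equiv.Perm.mul_apply, ← zpow_add] at h2
    simp at h2
    exact hx h2
  -- cardinality of R
  have hcard : Fintype.card {x : Fin n // x ∈ R} = m := by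
    have e1 : {x : Fin n // x ∈ R} ≃ {x : Fin n // x ∉ R} :=
      ⟨fun x => ⟨π₁ x.1, (hR₁ x.1).1 x.2⟩, fun x => ⟨π₁ x.1, hR₁' x.1 x.2⟩,
        fun x => Subtype.ext (hπ₁i x.1), fun x => Subtype.ext (hπ₁i x.1)⟩
    have e2 := Fintype.card_congr e1
    have e3 : Fintype.card {x : Fin n // x ∉ R}
        = Fintype.card (Fin n) - Fintype.card {x : Fin n // x ∈ R} :=
      Fintype.card_subtype_compl _
    have e4 : Fintype.card {x : Fin n // x ∈ R} ≤ Fintype.card (Fin n) :=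
      Fintype.card_subtype_le _
    rw [Fintype.card_fin] at e3 e4
    omega
  obtain ⟨e⟩ : Nonempty (Fin m ≃ {x : Fin n // x ∈ R}) :=
    ⟨(Fintype.equivFinOfCardEq hcard).symm⟩
  set e0 : Fin m → Fin n := fun j => (e j).1 with he0def
  have he0 : ∀ j, e0 j ∈ R := fun j => (e j).2
  have einj : Function.Injective e0 := fun i j hij => e.injective (Subtype.ext hij)
  have hesurj : ∀ x ∈ R, ∃ j, e0 j = x := fun x hx => ⟨e.symm ⟨x, hx⟩, by simp [he0def]⟩
  obtain ⟨σ₁', hσ₁'⟩ : ∃ s, s = buildPerm hm π₁ R e0 hR₁ he0 einj := ⟨_, rfl⟩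
  obtain ⟨σ₂', hσ₂'⟩ : ∃ s, s = buildPerm hm π₂ R e0 hR₂ he0 einj := ⟨_, rfl⟩
  have hstd₁ : MapsStd σ₁' π₁ := hσ₁' ▸ buildPerm_mapsStd hm π₁ R e0 hR₁ he0 einj
  have hstd₂ : MapsStd σ₂' π₂ := hσ₂' ▸ buildPerm_mapsStd hm π₂ R e0 hR₂ he0 einj
  have himg₁ : ⇑σ₁' '' Evens n = R := hσ₁' ▸ buildPerm_image hm π₁ R e0 hR₁ he0 einj hesurj
  have himg₂ : ⇑σ₂' '' Evens n = R := hσ₂' ▸ buildPerm_image hm π₂ R e0 hR₂ he0 einj hesurj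
  obtain ⟨ρ, hρdef⟩ : ∃ y : Equiv.Perm (Fin n), y = σ₂' * σ₁'⁻¹ := ⟨_, rfl⟩
  have hρR : ∀ x ∈ R, ρ x = x := by
    intro x hx
    obtain ⟨j, hj⟩ := hesurj x hx
    have hjlt := j.2
    have hk : (⟨2 * j.1, by omega⟩ : Fin n).1 % 2 = 0 := by dsimp only; omega
    have h1 : σ₁' ⟨2 * j.1, by omega⟩ = x := by
      rw [hσ₁', buildPerm_apply_even hm π₁ R e0 hR₁ he0 einj _ hk]
      have heq : (⟨(⟨2 * j.1, by omega⟩ : Fin n).1 / 2, by dsimp only; omega⟩ : Fin m) = j :=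
        Fin.ext (by dsimp only; omega)
      rw [heq, hj]
    have h2 : σ₂' ⟨2 * j.1, by omega⟩ = x := by
      rw [hσ₂', buildPerm_apply_even hm π₂ R e0 hR₂ he0 einj _ hk]
      have heq : (⟨(⟨2 * j.1, by omega⟩ : Fin n).1 / 2, by dsimp only; omega⟩ : Fin m) = j :=
        Fin.ext (by dsimp only; omega)
      rw [heq, hj]
    have h3 : σ₁'⁻¹ x = ⟨2 * j.1, by omega⟩ := by
      rw [← h1]; exact Equiv.Perm.inv_apply_self σ₁' _
    rw [hρdef, Equiv.Perm.mul_apply, h3, h2]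
  have hρRc : ∀ x, x ∉ R → ρ x = g x := by
    intro x hx
    have hπx : π₁ x ∈ R := hR₁' x hx
    obtain ⟨j, hj⟩ := hesurj _ hπx
    have hjlt := j.2
    have hkodd : ¬ (⟨2 * j.1 + 1, by omega⟩ : Fin n).1 % 2 = 0 := by dsimp only; omega
    have h1 : σ₁' ⟨2 * j.1 + 1, by omega⟩ = x := by
      rw [hσ₁', buildPerm_apply_odd hm π₁ R e0 hR₁ he0 einj _ hkodd]
      have heq : (⟨(⟨2 * j.1 + 1, by omega⟩ : Fin n).1 / 2, by dsimp only; omega⟩ : Fin m) = j :=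
        Fin.ext (by dsimp only; omega)
      rw [heq, hj, hπ₁i]
    have h2 : σ₂' ⟨2 * j.1 + 1, by omega⟩ = g x := by
      rw [hσ₂', buildPerm_apply_odd hm π₂ R e0 hR₂ he0 einj _ hkodd]
      have heq : (⟨(⟨2 * j.1 + 1, by omega⟩ : Fin n).1 / 2, by dsimp only; omega⟩ : Fin m) = j :=
        Fin.ext (by dsimp only; omega)
      rw [heq, hj, hgapp]
    have h3 : σ₁'⁻¹ x = ⟨2 * j.1 + 1, by omega⟩ := by
      rw [← h1]; exact Equiv.Perm.inv_apply_self σ₁' _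
    rw [hρdef, Equiv.Perm.mul_apply, h3, h2]
  -- orbit analysis
  obtain ⟨H, hH⟩ : ∃ y, y = (Subgroup.closure {π₁, π₂} : Subgroup (Equiv.Perm (Fin n))) :=
    ⟨_, rfl⟩
  have hπ₁H : π₁ ∈ H := by rw [hH]; exact Subgroup.subset_closure (Set.mem_insert _ _)
  have hπ₂H : π₂ ∈ H := by rw [hH]; exact Subgroup.subset_closure (Set.mem_insert_of_mem _ rfl)
  have hgH : g ∈ H := by rw [hgdef]; exact mul_mem hπ₂H hπ₁H
  have hdih : ∀ σ ∈ H, ∃ k : ℤ, σ = g ^ k ∨ σ = g ^ k * π₁ := by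
    intro σ hσ
    rw [hgdef]
    rw [hH] at hσ
    exact dihedral_form h₁.1 h₂.1 hσ
  have hρinvRc : ∀ x, x ∉ R → ρ⁻¹ x = g⁻¹ x := by
    intro x hx
    have h4 : g⁻¹ x ∉ R := hginvRc x hx
    have h5 : ρ (g⁻¹ x) = x := by rw [hρRc _ h4, Equiv.Perm.apply_inv_self]
    have h6 := Equiv.Perm.inv_apply_self ρ (g⁻¹ x)
    rw [h5] at h6
    exact h6
  have hρz : ∀ (k : ℤ) (x), x ∉ R → (ρ ^ k) x = (g ^ k) x := by
    intro k
    induction k using Int.induction_on with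
    | zero => intro x hx; simp
    | succ i ih =>
      intro x hx
      rw [zpow_add_one, zpow_add_one, Equiv.Perm.mul_apply, Equiv.Perm.mul_apply, hρRc x hx]
      exact ih _ (hgRc x hx)
    | pred i ih =>
      intro x hx
      rw [zpow_sub_one, zpow_sub_one, Equiv.Perm.mul_apply, Equiv.Perm.mul_apply, hρinvRc x hx]
      exact ih _ (hginvRc x hx)
  have hρfixz : ∀ (k : ℤ) (x), x ∈ R → (ρ ^ k) x = x := fun k x hx =>
    Equiv.Perm.zpow_apply_eq_self_of_apply_eq_self (hρR x hx) k
  obtain ⟨G', hG'⟩ : ∃ y, y = (Subgroup.closure {ρ} : Subgroup (Equiv.Perm (Fin n))) :=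
    ⟨_, rfl⟩
  have hρG' : ρ ∈ G' := by rw [hG']; exact Subgroup.subset_closure (Set.mem_singleton _)
  obtain ⟨o, ho⟩ : ∃ y : Fin n → Fin n, y = fun x => if x ∈ R then π₁ x else x := ⟨_, rfl⟩
  have ho1 : ∀ x, o x ∉ R := by
    intro x
    by_cases hx : x ∈ R
    · simp only [ho, if_pos hx]; exact (hR₁ x).1 hx
    · simp only [ho, if_neg hx]; exact hx
  have ho2 : ∀ x, ∃ τ ∈ H, τ x = o x := by
    intro x
    by_cases hx : x ∈ R
    · exact ⟨π₁, hπ₁H, by simp only [ho, if_pos hx]⟩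
    · exact ⟨1, one_mem _, by simp only [ho, if_neg hx, Equiv.Perm.one_apply]⟩
  have hoid : ∀ x, x ∉ R → o x = x := fun x hx => by simp only [ho, if_neg hx]
  have hkey : ∀ u v : Fin n, u ∉ R → v ∉ R → (∃ σ ∈ H, σ v = u) → ∃ k : ℤ, (g ^ k) v = u := by
    rintro u v hu hv ⟨σ, hσH, rfl⟩
    obtain ⟨k, hk | hk⟩ := hdih σ hσH
    · exact ⟨k, by rw [hk]⟩
    · exfalso
      apply hu
      rw [hk, Equiv.Perm.mul_apply]
      exact hgz k _ (hR₁' v hv)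
  have hHrel : ∀ a b : Fin n, (MulAction.orbitRel H (Fin n)) a b ↔ ∃ σ ∈ H, σ b = a :=
    fun a b => orbitRel_perm_iff H a b
  have hG'rel : ∀ a b : Fin n, (MulAction.orbitRel G' (Fin n)) a b ↔ ∃ k : ℤ, (ρ ^ k) b = a := by
    intro a b
    rw [orbitRel_perm_iff]
    constructor
    · rintro ⟨σ, hσ, rfl⟩
      rw [hG'] at hσ
      obtain ⟨k, rfl⟩ := Subgroup.mem_closure_singleton.1 hσ
      exact ⟨k, rfl⟩
    · rintro ⟨k, rfl⟩
      exact ⟨ρ ^ k, Subgroup.zpow_mem _ hρG' k, rfl⟩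
  have hout_rel : ∀ a b : Fin n, (∃ σ ∈ H, σ b = a) → ∃ k : ℤ, (g ^ k) (o b) = o a := by
    rintro a b ⟨σ, hσH, rfl⟩
    obtain ⟨τa, hτaH, hτa⟩ := ho2 (σ b)
    obtain ⟨τb, hτbH, hτb⟩ := ho2 b
    refine hkey _ _ (ho1 (σ b)) (ho1 b)
      ⟨τa * σ * τb⁻¹, mul_mem (mul_mem hτaH hσH) (inv_mem hτbH), ?_⟩
    rw [Equiv.Perm.mul_apply, Equiv.Perm.mul_apply, ← hτb, Equiv.Perm.inv_apply_self, hτa]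
  have hwd : ∀ a b : Fin n, (MulAction.orbitRel H (Fin n)) a b →
      (Quotient.mk'' (o a) : MulAction.orbitRel.Quotient G' (Fin n)) = Quotient.mk'' (o b) := by
    intro a b hab
    obtain ⟨k, hk⟩ := hout_rel a b ((hHrel a b).1 hab)
    rw [← hρz k _ (ho1 b)] at hk
    exact Quotient.sound' ((hG'rel (o a) (o b)).2 ⟨k, hk⟩)
  let F : {x : Fin n // x ∈ R} ⊕ MulAction.orbitRel.Quotient H (Fin n) →
      MulAction.orbitRel.Quotient G' (Fin n) :=
    Sum.elim (fun r => Quotient.mk'' r.1)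
      (fun q => Quotient.liftOn' q
        (fun x => (Quotient.mk'' (o x) : MulAction.orbitRel.Quotient G' (Fin n))) hwd)
  have hmkρ : ∀ x y : Fin n,
      (Quotient.mk'' x : MulAction.orbitRel.Quotient G' (Fin n)) = Quotient.mk'' y →
      ∃ k : ℤ, (ρ ^ k) y = x := by
    intro x y hxy
    exact (hG'rel x y).1 (Quotient.eq''.1 hxy)
  have hFbij : Function.Bijective F := by
    constructor
    · rintro (r | q) (r' | q') hF
      · obtain ⟨k, hk⟩ := hmkρ r.1 r'.1 hF
        rw [hρfixz k _ r'.2] at hk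
        exact congrArg Sum.inl (Subtype.ext hk.symm)
      · exfalso
        revert hF
        refine Quotient.inductionOn' q' (fun x hF => ?_)
        obtain ⟨k, hk⟩ := hmkρ r.1 (o x) hF
        rw [hρz k _ (ho1 x)] at hk
        exact hgzc k _ (ho1 x) (hk ▸ r.2)
      · exfalso
        revert hF
        refine Quotient.inductionOn' q (fun x hF => ?_)
        obtain ⟨k, hk⟩ := hmkρ (o x) r'.1 hF
        rw [hρfixz k _ r'.2] at hk
        exact ho1 x (by rw [← hk]; exact r'.2)
      · revert hF
        refine Quotient.inductionOn₂' q q' (fun x y hF => ?_)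
        obtain ⟨k, hk⟩ := hmkρ (o x) (o y) hF
        rw [hρz k _ (ho1 y)] at hk
        refine congrArg Sum.inr (Quotient.sound' ((hHrel x y).2 ?_))
        obtain ⟨τx, hτxH, hτx⟩ := ho2 x
        obtain ⟨τy, hτyH, hτy⟩ := ho2 y
        refine ⟨τx⁻¹ * (g ^ k * τy),
          mul_mem (inv_mem hτxH) (mul_mem (Subgroup.zpow_mem _ hgH k) hτyH), ?_⟩
        rw [Equiv.Perm.mul_apply, Equiv.Perm.mul_apply, hτy, hk, ← hτx,
          Equiv.Perm.inv_apply_self]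
    · intro q
      refine Quotient.inductionOn' q (fun x => ?_)
      by_cases hx : x ∈ R
      · exact ⟨Sum.inl ⟨x, hx⟩, rfl⟩
      · refine ⟨Sum.inr (Quotient.mk'' x), ?_⟩
        show (Quotient.mk'' (o x) : MulAction.orbitRel.Quotient G' (Fin n)) = Quotient.mk'' x
        rw [hoid x hx]
  have hb1 : Nat.card ({x : Fin n // x ∈ R} ⊕ MulAction.orbitRel.Quotient H (Fin n)) =
      Nat.card (MulAction.orbitRel.Quotient G' (Fin n)) := Nat.card_eq_of_bijective F hFbij
  have hb2 : Nat.card ({x : Fin n // x ∈ R} ⊕ MulAction.orbitRel.Quotient H (Fin n)) =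
      m + jointOrbitCount π₁ π₂ := by
    rw [Nat.card_sum]
    congr 1
    · rw [Nat.card_eq_fintype_card, hcard]
    · unfold jointOrbitCount
      rw [hH]
  have hb3 : Nat.card (MulAction.orbitRel.Quotient G' (Fin n)) =
      (Finset.univ.filter fun x => ρ x = x).card + ρ.cycleFactorsFinset.card := by
    rw [hG']
    exact orbitCount_eq ρ
  have hfix : (Finset.univ.filter fun x => ρ x = x).card =
      m + (Finset.univ.filter fun x : Fin n => x ∉ R ∧ g x = x).card := by
    have hsplit := Finset.card_filter_add_card_filter_not
      (s := Finset.univ.filter fun x : Fin n => ρ x = x) (p := fun x => x ∈ R)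
    have h1 : (Finset.univ.filter fun x : Fin n => ρ x = x).filter (fun x => x ∈ R)
        = Finset.univ.filter (fun x : Fin n => x ∈ R) := by
      ext x
      simp only [Finset.mem_filter, Finset.mem_univ, true_and]
      exact ⟨fun h => h.2, fun h => ⟨hρR x h, h⟩⟩
    have h2 : (Finset.univ.filter fun x : Fin n => ρ x = x).filter (fun x => ¬ x ∈ R)
        = Finset.univ.filter (fun x : Fin n => x ∉ R ∧ g x = x) := by
      ext x
      simp only [Finset.mem_filter, Finset.mem_univ, true_and]
      constructor
      · rintro ⟨h3, h4⟩
        exact ⟨h4, by rw [← hρRc x h4]; exact h3⟩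
      · rintro ⟨h4, h3⟩
        exact ⟨by rw [hρRc x h4]; exact h3, h4⟩
    have h3card : (Finset.univ.filter fun x : Fin n => x ∈ R).card = m := by
      rw [← hcard]
      exact (Fintype.card_subtype _).symm
    rw [h1, h2, h3card] at hsplit
    omega
  have hsupp : ρ.support.card + (Finset.univ.filter fun x => ρ x = x).card = n := by
    have hsplit := Finset.card_filter_add_card_filter_not
      (s := (Finset.univ : Finset (Fin n))) (p := fun x => ρ x = x)
    rw [Finset.card_univ, Fintype.card_fin] at hsplit
    have hsupp_eq : ρ.support = Finset.univ.filter fun x => ¬ ρ x = x := by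
      ext x
      simp [Equiv.Perm.mem_support]
    rw [hsupp_eq]
    omega
  have hsign : Equiv.Perm.sign ρ
      = (-1 : ℤˣ) ^ (ρ.support.card + ρ.cycleFactorsFinset.card) := by
    rw [Equiv.Perm.sign_of_cycleType, Equiv.Perm.sum_cycleType]
    congr 1
    rw [Equiv.Perm.cycleType_def, Multiset.card_map]
    rfl
  have hle : Nat.card (MulAction.orbitRel.Quotient G' (Fin n)) ≤ n := by
    have hs : Function.Surjective
        (Quotient.mk'' : Fin n → MulAction.orbitRel.Quotient G' (Fin n)) :=
      fun q => Quotient.inductionOn' q (fun x => ⟨x, rfl⟩)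
    have h7 := Nat.card_le_card_of_surjective _ hs
    have hn' : Nat.card (Fin n) = n := by simp
    exact le_trans h7 (le_of_eq hn')
  have htarget : Equiv.Perm.sign ρ = (-1 : ℤˣ) ^ (n / 2 - jointOrbitCount π₁ π₂) := by
    have hsum : m + jointOrbitCount π₁ π₂ =
        (Finset.univ.filter fun x => ρ x = x).card + ρ.cycleFactorsFinset.card :=
      hb2.symm.trans (hb1.trans hb3)
    have h9 : m + jointOrbitCount π₁ π₂ ≤ n := by
      rw [← hb2, hb1]
      exact hle
    have hn2 : n / 2 = m := by omega
    rw [hsign, hn2]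
    have hexp : ρ.support.card + ρ.cycleFactorsFinset.card =
        (m - jointOrbitCount π₁ π₂) + 2 * ρ.cycleFactorsFinset.card := by
      omega
    rw [hexp, pow_add, pow_mul]
    norm_num
  constructor
  · intro σ₁ σ₂ hs1 hs2 hi1 hi2
    have e1 : Equiv.Perm.sign σ₁ = Equiv.Perm.sign σ₁' :=
      sign_eq_of_mapsStd hm π₁ R σ₁ σ₁' hs1 hstd₁ hi1 himg₁
    have e2 : Equiv.Perm.sign σ₂ = Equiv.Perm.sign σ₂' :=
      sign_eq_of_mapsStd hm π₂ R σ₂ σ₂' hs2 hstd₂ hi2 himg₂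
    calc Equiv.Perm.sign (σ₂ * σ₁⁻¹) = Equiv.Perm.sign σ₂ * Equiv.Perm.sign σ₁ := by
          rw [map_mul, Equiv.Perm.sign_inv]
    _ = Equiv.Perm.sign σ₂' * Equiv.Perm.sign σ₁' := by rw [e1, e2]
    _ = Equiv.Perm.sign ρ := by rw [hρdef, map_mul, Equiv.Perm.sign_inv]
    _ = _ := htarget
  · refine ⟨σ₁', σ₂', hstd₁, hstd₂, himg₁, himg₂, ?_, ?_⟩
    · intro x hx
      rw [← hρdef]
      exact hρR x hx
    · intro x hx
      rw [← hρdef, hρRc x hx, hgdef]
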